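/- arXiv:1012.2372 — 3 statements merged into one kernel-verified Lean document; each statement's English description precedes it below -/
import Mathlib

section
/- For every positive integer k and all real numbers β₁, ..., β_k, we have cos(β₁ + ⋯ + β_k) ≥ k·(cos β₁ + ⋯ + cos β_k) − k² + 1. -/
open Finset

lemma cos_half_sq (t : ℝ) : Real.cos t = 1 - 2 * Real.sin (t / 2) ^ 2 := by
  have h : t = 2 * (t / 2) := by ring
  rw [h, Real.cos_two_mul, Real.cos_sq']
  ring

lemma abs_sin_sum_le {ι : Type*} (s : Finset ι) (f : ι → ℝ) :
    |Real.sin (∑ i ∈ s, f i)| ≤ ∑ i ∈ s, |Real.sin (f i)| := by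
  induction s using Finset.cons_induction with
  | empty => simp
  | cons a s ha ih =>
    rw [Finset.sum_cons, Finset.sum_cons, Real.sin_add]
    calc |Real.sin (f a) * Real.cos (∑ i ∈ s, f i) +
            Real.cos (f a) * Real.sin (∑ i ∈ s, f i)|
        ≤ |Real.sin (f a) * Real.cos (∑ i ∈ s, f i)| +
            |Real.cos (f a) * Real.sin (∑ i ∈ s, f i)| := abs_add_le _ _
      _ ≤ |Real.sin (f a)| * 1 + 1 * |Real.sin (∑ i ∈ s, f i)| := by
          rw [abs_mul, abs_mul]
          gcongr
          · exact Real.abs_cos_le_one _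
          · exact Real.abs_cos_le_one _
      _ ≤ |Real.sin (f a)| + ∑ i ∈ s, |Real.sin (f i)| := by
          rw [mul_one, one_mul]; gcongr

theorem cos_sum_ge (k : ℕ) (hk : 0 < k) (β : Fin k → ℝ) :
    Real.cos (∑ i, β i) ≥ k * (∑ i, Real.cos (β i)) - k ^ 2 + 1 := by
  have key : (1 : ℝ) - Real.cos (∑ i, β i) ≤ k * ∑ i, (1 - Real.cos (β i)) := by
    have h1 : (1 : ℝ) - Real.cos (∑ i, β i) = 2 * Real.sin ((∑ i, β i) / 2) ^ 2 := by
      have := cos_half_sq (∑ i, β i)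
      linarith
    have h2 : ∀ i, (1 : ℝ) - Real.cos (β i) = 2 * Real.sin (β i / 2) ^ 2 := by
      intro i
      have := cos_half_sq (β i)
      linarith
    rw [h1]
    have cs : (∑ i, (1 : ℝ) * |Real.sin (β i / 2)|) ^ 2 ≤
        (∑ _i : Fin k, (1:ℝ) ^ 2) * ∑ i, |Real.sin (β i / 2)| ^ 2 :=
      Finset.sum_mul_sq_le_sq_mul_sq _ _ _
    have habs : |Real.sin ((∑ i, β i) / 2)| ≤ ∑ i, |Real.sin (β i / 2)| := by
      rw [Finset.sum_div]
      exact abs_sin_sum_le _ _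
    have hsq : Real.sin ((∑ i, β i) / 2) ^ 2 ≤ (∑ i, |Real.sin (β i / 2)|) ^ 2 := by
      rw [← sq_abs]
      exact pow_le_pow_left₀ (abs_nonneg _) habs 2
    have hk2 : (∑ i, |Real.sin (β i / 2)|) ^ 2 ≤ k * ∑ i, Real.sin (β i / 2) ^ 2 := by
      simpa [sq_abs] using cs
    calc 2 * Real.sin ((∑ i, β i) / 2) ^ 2
        ≤ 2 * (k * ∑ i, Real.sin (β i / 2) ^ 2) := by
          have := hsq.trans hk2
          linarith
      _ = k * ∑ i, (1 - Real.cos (β i)) := by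
          simp only [h2, Finset.mul_sum]
          exact Finset.sum_congr rfl fun i _ => by ring
  have hsum : ∑ i, ((1:ℝ) - Real.cos (β i)) = k - ∑ i, Real.cos (β i) := by
    rw [Finset.sum_sub_distrib]
    simp
  rw [hsum] at key
  have : (k : ℝ) * (k - ∑ i, Real.cos (β i)) = k^2 - k * ∑ i, Real.cos (β i) := by ring
  rw [this] at key
  linarith
end

section
/- Let Z be a random vector in F_q^n, V a subspace of F_q^n, and U ≤ V a subspace with P(Z ∉ U) > 0. Then P(Z ∈ V \ U) / P(Z ∉ U) ≤ P(Z ∈ V). -/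
open Finset

open scoped Classical in
theorem single_step_bound {F : Type} [Field F] [Fintype F] (n : ℕ)
    (μ : (Fin n → F) → ℝ) (hμ0 : ∀ z, 0 ≤ μ z) (hμ1 : ∑ z, μ z = 1)
    (U V : Submodule F (Fin n → F)) (hUV : U ≤ V)
    (hpos : 0 < ∑ z ∈ univ.filter (fun z : Fin n → F => z ∉ U), μ z) :
    (∑ z ∈ univ.filter (fun z : Fin n → F => z ∈ V ∧ z ∉ U), μ z) /
      (∑ z ∈ univ.filter (fun z : Fin n → F => z ∉ U), μ z) ≤
    ∑ z ∈ univ.filter (fun z : Fin n → F => z ∈ V), μ z := by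
  set a := ∑ z ∈ univ.filter (fun z : Fin n → F => z ∈ U), μ z with ha
  set b := ∑ z ∈ univ.filter (fun z : Fin n → F => z ∈ V ∧ z ∉ U), μ z with hb
  set c := ∑ z ∈ univ.filter (fun z : Fin n → F => z ∉ U), μ z with hc
  have hac : a + c = 1 := by
    rw [ha, hc, sum_filter_add_sum_filter_not, hμ1]
  have hV : ∑ z ∈ univ.filter (fun z : Fin n → F => z ∈ V), μ z = a + b := by
    rw [ha, hb]
    rw [← sum_filter_add_sum_filter_not (univ.filter (fun z : Fin n → F => z ∈ V))
      (fun z => z ∈ U)]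
    congr 1
    · congr 1
      ext z
      simp only [mem_filter, mem_univ, true_and]
      exact ⟨fun h => h.2, fun h => ⟨hUV h, h⟩⟩
    · congr 1
      ext z
      simp [mem_filter, and_comm]
  have ha0 : 0 ≤ a := sum_nonneg fun z _ => hμ0 z
  have hb0 : 0 ≤ b := sum_nonneg fun z _ => hμ0 z
  have hbc : b ≤ c := by
    rw [hb, hc]
    apply sum_le_sum_of_subset_of_nonneg
    · intro z hz
      simp only [mem_filter, mem_univ, true_and] at *
      exact hz.2
    · intro z _ _; exact hμ0 z
  rw [hV, div_le_iff₀ hpos]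
  nlinarith
end

section
/- Let μ be a probability measure on F_q, w ∈ F_q^n, and define ψ(t) = 1 − |μ̂(t)|² and f(t) = Σ_{ℓ=1}^n ψ(w_ℓ t) for t ∈ F_q. Then for all t₁, ..., t_k ∈ F_q, f(t₁ + ⋯ + t_k) ≤ k²·max(f(t₁),...,f(t_k)); in particular the level sets T(v) = {t : f(t) ≤ v} satisfy T(v) + ⋯ + T(v) (k summands) ⊆ T(k²v). -/
open Finset

/-- The standard additive character of `ZMod p`. -/
noncomputable def ep (p : ℕ) (x : ZMod p) : ℂ :=
  Complex.exp (2 * Real.pi * Complex.I * (x.val : ℂ) / p)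

/-- The Fourier transform of `μ : F → ℝ` at `s ∈ F`, via the field trace to `ZMod p`. -/
noncomputable def muHat (p : ℕ) {F : Type} [Field F] [Fintype F] [Algebra (ZMod p) F]
    (μ : F → ℝ) (s : F) : ℂ :=
  ∑ t : F, (μ t : ℂ) * ep p (Algebra.trace (ZMod p) F (s * t))

lemma ep_norm (p : ℕ) (x : ZMod p) : ‖ep p x‖ = 1 := by
  have h : (2 * Real.pi * Complex.I * (x.val : ℂ) / p)
      = ((2 * Real.pi * x.val / p : ℝ) : ℂ) * Complex.I := by
    push_cast; ring
  rw [ep, h, Complex.norm_exp_ofReal_mul_I]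

lemma ep_zero (p : ℕ) : ep p 0 = 1 := by
  simp [ep]

lemma ep_add (p : ℕ) [NeZero p] (a b : ZMod p) : ep p (a + b) = ep p a * ep p b := by
  have hp : (p : ℂ) ≠ 0 := by exact_mod_cast (NeZero.ne p)
  have hval : a.val + b.val = (a + b).val + p * ((a.val + b.val) / p) := by
    rw [ZMod.val_add]
    exact (Nat.mod_add_div _ _).symm
  rw [ep, ep, ep, ← Complex.exp_add, Complex.exp_eq_exp_iff_exists_int]
  refine ⟨-(((a.val + b.val) / p : ℕ) : ℤ), ?_⟩
  generalize hm : (a.val + b.val) / p = m at hval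
  generalize hA : a.val = A at hval
  generalize hB : b.val = B at hval
  generalize hC : (a + b).val = C at hval
  have hc : (A : ℂ) + B = (C : ℂ) + p * m := by exact_mod_cast hval
  push_cast
  field_simp
  linear_combination -hc

lemma ep_sum (p : ℕ) [NeZero p] {ι : Type*} (s : Finset ι) (g : ι → ZMod p) :
    ep p (∑ i ∈ s, g i) = ∏ i ∈ s, ep p (g i) := by
  classical
  induction s using Finset.induction with
  | empty => simp [ep_zero]
  | insert _ _ h ih => rw [Finset.sum_insert h, Finset.prod_insert h, ep_add, ih]

lemma norm_prod_sub_prod {ι : Type*} (s : Finset ι) (z w : ι → ℂ)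
    (hz : ∀ i ∈ s, ‖z i‖ = 1) (hw : ∀ i ∈ s, ‖w i‖ = 1) :
    ‖∏ i ∈ s, z i - ∏ i ∈ s, w i‖ ≤ ∑ i ∈ s, ‖z i - w i‖ := by
  classical
  induction s using Finset.induction with
  | empty => simp
  | @insert a s h ih =>
    rw [Finset.prod_insert h, Finset.prod_insert h, Finset.sum_insert h]
    have hPw : ‖∏ i ∈ s, w i‖ = 1 := by
      rw [norm_prod]
      exact Finset.prod_eq_one fun i hi => hw i (Finset.mem_insert_of_mem hi)
    calc ‖z a * ∏ i ∈ s, z i - w a * ∏ i ∈ s, w i‖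
        ≤ ‖z a * ∏ i ∈ s, z i - z a * ∏ i ∈ s, w i‖
          + ‖z a * ∏ i ∈ s, w i - w a * ∏ i ∈ s, w i‖ := by
          have h' := norm_add_le (z a * ∏ i ∈ s, z i - z a * ∏ i ∈ s, w i)
            (z a * ∏ i ∈ s, w i - w a * ∏ i ∈ s, w i)
          simpa using h'
      _ = ‖z a‖ * ‖∏ i ∈ s, z i - ∏ i ∈ s, w i‖ + ‖z a - w a‖ * ‖∏ i ∈ s, w i‖ := by
          rw [← norm_mul, ← norm_mul, mul_sub, sub_mul]
      _ ≤ ‖z a - w a‖ + ∑ i ∈ s, ‖z i - w i‖ := by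
          rw [hz a (Finset.mem_insert_self a s), hPw, one_mul, mul_one]
          have h' := ih (fun i hi => hz i (Finset.mem_insert_of_mem hi))
            (fun i hi => hw i (Finset.mem_insert_of_mem hi))
          linarith

lemma weighted_sum_le {X : Type*} [Fintype X] {k : ℕ} (c : X → X → ℝ)
    (hc : ∀ x y, 0 ≤ c x y) (a : Fin k → X → X → ℝ) (b : X → X → ℝ)
    (hb : ∀ x y, b x y ≤ (k : ℝ) * ∑ j, a j x y) :
    ∑ x, ∑ y, c x y * b x y ≤ (k : ℝ) * ∑ j, ∑ x, ∑ y, c x y * a j x y := by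
  have step1 : ∑ x, ∑ y, c x y * b x y ≤ ∑ x, ∑ y, ∑ j, (k : ℝ) * (c x y * a j x y) := by
    refine Finset.sum_le_sum fun x _ => Finset.sum_le_sum fun y _ => ?_
    calc c x y * b x y ≤ c x y * ((k : ℝ) * ∑ j, a j x y) :=
          mul_le_mul_of_nonneg_left (hb x y) (hc x y)
      _ = ∑ j, (k : ℝ) * (c x y * a j x y) := by
          rw [Finset.mul_sum, Finset.mul_sum]
          exact Finset.sum_congr rfl fun j _ => by ring
  refine step1.trans_eq ?_
  rw [show (∑ x, ∑ y, ∑ j, (k : ℝ) * (c x y * a j x y))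
      = ∑ x, ∑ j, ∑ y, (k : ℝ) * (c x y * a j x y) from
      Finset.sum_congr rfl fun x _ => Finset.sum_comm,
    Finset.sum_comm, Finset.mul_sum]
  refine Finset.sum_congr rfl fun j _ => ?_
  rw [Finset.mul_sum]
  exact Finset.sum_congr rfl fun x _ => (Finset.mul_sum _ _ _).symm

lemma one_sub_norm_sq_rep (p : ℕ) [Fact p.Prime] {F : Type} [Field F] [Fintype F]
    [Algebra (ZMod p) F] (μ : F → ℝ) (hμ1 : ∑ t, μ t = 1) (u : F) :
    1 - ‖muHat p μ u‖ ^ 2 = ∑ x : F, ∑ y : F,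
      μ x * μ y * (‖ep p (Algebra.trace (ZMod p) F (u * x))
        - ep p (Algebra.trace (ZMod p) F (u * y))‖ ^ 2 / 2) := by
  classical
  set χ : F → ℂ := fun x => ep p (Algebra.trace (ZMod p) F (u * x)) with hχ
  have hunit : ∀ x, ‖χ x‖ = 1 := fun x => ep_norm _ _
  have hS : ‖muHat p μ u‖ ^ 2
      = ∑ x : F, ∑ y : F, μ x * μ y * (χ x * starRingEnd ℂ (χ y)).re := by
    have h1 : ‖muHat p μ u‖ ^ 2 = (muHat p μ u * starRingEnd ℂ (muHat p μ u)).re := by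
      rw [Complex.mul_conj, Complex.ofReal_re, ← Complex.sq_norm]
    rw [h1, muHat]
    rw [show (starRingEnd ℂ) (∑ t : F, (μ t : ℂ) * χ t)
        = ∑ t : F, (μ t : ℂ) * starRingEnd ℂ (χ t) by
      rw [map_sum]; exact Finset.sum_congr rfl fun t _ => by rw [map_mul, Complex.conj_ofReal]]
    rw [Finset.sum_mul_sum, Complex.re_sum]
    refine Finset.sum_congr rfl fun x _ => ?_
    rw [Complex.re_sum]
    refine Finset.sum_congr rfl fun y _ => ?_
    have h2 : (μ x : ℂ) * χ x * ((μ y : ℂ) * starRingEnd ℂ (χ y))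
        = ((μ x * μ y : ℝ) : ℂ) * (χ x * starRingEnd ℂ (χ y)) := by push_cast; ring
    rw [h2, Complex.re_ofReal_mul]
  have hμ2 : ∑ x : F, ∑ y : F, μ x * μ y = 1 := by
    rw [← Finset.sum_mul_sum, hμ1, one_mul]
  calc 1 - ‖muHat p μ u‖ ^ 2
      = ∑ x : F, ∑ y : F, (μ x * μ y - μ x * μ y * (χ x * starRingEnd ℂ (χ y)).re) := by
        rw [hS, ← hμ2]
        simp only [← Finset.sum_sub_distrib]
    _ = ∑ x : F, ∑ y : F, μ x * μ y * (‖χ x - χ y‖ ^ 2 / 2) := by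
        refine Finset.sum_congr rfl fun x _ => Finset.sum_congr rfl fun y _ => ?_
        have hd : ‖χ x - χ y‖ ^ 2 = 2 - 2 * (χ x * starRingEnd ℂ (χ y)).re := by
          have h1 : ‖χ x - χ y‖ ^ 2 = Complex.normSq (χ x - χ y) := by
            rw [Complex.sq_norm]
          have h2 : Complex.normSq (χ x) = 1 := by
            rw [← Complex.sq_norm, hunit]; norm_num
          have h3 : Complex.normSq (χ y) = 1 := by
            rw [← Complex.sq_norm, hunit]; norm_num
          rw [h1, Complex.normSq_sub, h2, h3]; ring
        rw [hd]; ring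

lemma core_ineq (p : ℕ) [Fact p.Prime] {F : Type} [Field F] [Fintype F]
    [Algebra (ZMod p) F] (μ : F → ℝ) (hμ0 : ∀ t, 0 ≤ μ t) (hμ1 : ∑ t, μ t = 1)
    {k : ℕ} (s : Fin k → F) :
    1 - ‖muHat p μ (∑ j, s j)‖ ^ 2 ≤ (k : ℝ) * ∑ j, (1 - ‖muHat p μ (s j)‖ ^ 2) := by
  classical
  have hpne : NeZero p := ⟨(Fact.out : p.Prime).ne_zero⟩
  set E : F → F → ℂ := fun u z => ep p (Algebra.trace (ZMod p) F (u * z)) with hE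
  have hrep : ∀ u : F, 1 - ‖muHat p μ u‖ ^ 2
      = ∑ x : F, ∑ y : F, μ x * μ y * (‖E u x - E u y‖ ^ 2 / 2) :=
    fun u => one_sub_norm_sq_rep p μ hμ1 u
  have hb : ∀ x y : F, ‖E (∑ j, s j) x - E (∑ j, s j) y‖ ^ 2 / 2
      ≤ (k : ℝ) * ∑ j, (‖E (s j) x - E (s j) y‖ ^ 2 / 2) := by
    intro x y
    have hprod : ∀ z : F, E (∑ j, s j) z = ∏ j, E (s j) z := by
      intro z
      show ep p (Algebra.trace (ZMod p) F ((∑ j, s j) * z)) = _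
      rw [Finset.sum_mul, map_sum, ep_sum]
    have h1 : ‖E (∑ j, s j) x - E (∑ j, s j) y‖ ≤ ∑ j, ‖E (s j) x - E (s j) y‖ := by
      rw [hprod x, hprod y]
      exact norm_prod_sub_prod _ _ _ (fun i _ => ep_norm _ _) (fun i _ => ep_norm _ _)
    have h2 : (∑ j, ‖E (s j) x - E (s j) y‖) ^ 2
        ≤ (k : ℝ) * ∑ j, ‖E (s j) x - E (s j) y‖ ^ 2 := by
      simpa using sq_sum_le_card_mul_sum_sq (s := (Finset.univ : Finset (Fin k)))
        (f := fun j => ‖E (s j) x - E (s j) y‖)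
    have h3 : ‖E (∑ j, s j) x - E (∑ j, s j) y‖ ^ 2
        ≤ (∑ j, ‖E (s j) x - E (s j) y‖) ^ 2 :=
      pow_le_pow_left₀ (norm_nonneg _) h1 2
    have h4 : ‖E (∑ j, s j) x - E (∑ j, s j) y‖ ^ 2
        ≤ (k : ℝ) * ∑ j, ‖E (s j) x - E (s j) y‖ ^ 2 := h3.trans h2
    rw [show (k : ℝ) * ∑ j, (‖E (s j) x - E (s j) y‖ ^ 2 / 2)
        = ((k : ℝ) * ∑ j, ‖E (s j) x - E (s j) y‖ ^ 2) / 2 by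
      rw [← Finset.sum_div]; ring]
    linarith
  calc 1 - ‖muHat p μ (∑ j, s j)‖ ^ 2
      = ∑ x : F, ∑ y : F, μ x * μ y * (‖E (∑ j, s j) x - E (∑ j, s j) y‖ ^ 2 / 2) := hrep _
    _ ≤ (k : ℝ) * ∑ j, ∑ x : F, ∑ y : F, μ x * μ y * (‖E (s j) x - E (s j) y‖ ^ 2 / 2) :=
        weighted_sum_le (fun x y => μ x * μ y) (fun x y => mul_nonneg (hμ0 x) (hμ0 y))
          (fun j x y => ‖E (s j) x - E (s j) y‖ ^ 2 / 2)
          (fun x y => ‖E (∑ j, s j) x - E (∑ j, s j) y‖ ^ 2 / 2) hb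
    _ = (k : ℝ) * ∑ j, (1 - ‖muHat p μ (s j)‖ ^ 2) := by
        refine congrArg _ (Finset.sum_congr rfl fun j _ => (hrep (s j)).symm)

theorem level_set_sumset (p : ℕ) [Fact p.Prime] {F : Type} [Field F] [Fintype F]
    [Algebra (ZMod p) F] (μ : F → ℝ) (hμ0 : ∀ t, 0 ≤ μ t) (hμ1 : ∑ t, μ t = 1)
    (n : ℕ) (w : Fin n → F)
    (f : F → ℝ) (hf : ∀ t, f t = ∑ i, (1 - ‖muHat p μ (w i * t)‖ ^ 2))
    (k : ℕ) (hk : 0 < k) :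
    (∀ t : Fin k → F, ∀ v : ℝ, (∀ j, f (t j) ≤ v) → f (∑ j, t j) ≤ k ^ 2 * v) ∧
    (∀ v : ℝ, ∀ s ∈ {x : F | ∃ t : Fin k → F, (∀ j, f (t j) ≤ v) ∧ x = ∑ j, t j},
      f s ≤ k ^ 2 * v) := by
  have main : ∀ t : Fin k → F, ∀ v : ℝ, (∀ j, f (t j) ≤ v) → f (∑ j, t j) ≤ k ^ 2 * v := by
    intro t v hv
    have h1 : f (∑ j, t j) ≤ (k : ℝ) * ∑ j, f (t j) := by
      rw [hf]
      calc ∑ i, (1 - ‖muHat p μ (w i * ∑ j, t j)‖ ^ 2)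
          ≤ ∑ i, ((k : ℝ) * ∑ j, (1 - ‖muHat p μ (w i * t j)‖ ^ 2)) := by
            refine Finset.sum_le_sum fun i _ => ?_
            have := core_ineq p μ hμ0 hμ1 (fun j => w i * t j)
            rwa [← Finset.mul_sum] at this
        _ = (k : ℝ) * ∑ j, f (t j) := by
            rw [← Finset.mul_sum, Finset.sum_comm]
            congr 1
            exact Finset.sum_congr rfl fun j _ => (hf (t j)).symm
    have h2 : ∑ j, f (t j) ≤ (k : ℝ) * v := by
      calc ∑ j, f (t j) ≤ ∑ _j : Fin k, v := Finset.sum_le_sum fun j _ => hv j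
        _ = (k : ℝ) * v := by simp [mul_comm]
    calc f (∑ j, t j) ≤ (k : ℝ) * ∑ j, f (t j) := h1
      _ ≤ (k : ℝ) * ((k : ℝ) * v) := by
          exact mul_le_mul_of_nonneg_left h2 (by positivity)
      _ = (k : ℝ) ^ 2 * v := by ring
  refine ⟨main, fun v s hs => ?_⟩
  obtain ⟨t, ht, rfl⟩ := hs
  exact main t v ht
end
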